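/- Let n ≥ 1 and m : Fin n → Fin n → ℝ, and define the bilinear model f(x) = ∑_{j} ∑_{k} m_{jk}·x_j·x_k. Then for all points a, b ∈ ℝⁿ and every feature i, the Integrated Gradients attribution along the straight-line path from a to b is given in closed form by IG_i(f,a,b) = (b_i − a_i) · ∑_{j} (m_{ij} + m_{ji})·(a_j + b_j)/2. -/

import Mathlib

noncomputable def IG {n : ℕ} (f : (Fin n → ℝ) → ℝ) (a b : Fin n → ℝ) (i : Fin n) : ℝ :=
  (b i - a i) * ∫ t in (0:ℝ)..1, fderiv ℝ f (fun j => a j + t * (b j - a j)) (Pi.single i 1)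

theorem IG_bilinear_closed_form (n : ℕ) (hn : 1 ≤ n) (m : Fin n → Fin n → ℝ)
    (f : (Fin n → ℝ) → ℝ)
    (hf : f = fun x => ∑ j, ∑ k, m j k * x j * x k)
    (a b : Fin n → ℝ) (i : Fin n) :
    IG f a b i = (b i - a i) * ∑ j, (m i j + m j i) * (a j + b j) / 2 := by
  classical
  have key : ∀ x : Fin n → ℝ,
      fderiv ℝ f x (Pi.single i 1) = ∑ j, (m i j + m j i) * x j := by
    intro x
    have hd : HasFDerivAt f
        (∑ j, ∑ k, ((m j k * x j) • (ContinuousLinearMap.proj k : (Fin n → ℝ) →L[ℝ] ℝ)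
          + x k • ((m j k) • (ContinuousLinearMap.proj j : (Fin n → ℝ) →L[ℝ] ℝ)))) x := by
      rw [hf]
      apply HasFDerivAt.fun_sum
      intro j _
      apply HasFDerivAt.fun_sum
      intro k _
      exact ((hasFDerivAt_apply j x).const_mul (m j k)).mul (hasFDerivAt_apply k x)
    rw [hd.fderiv]
    simp only [ContinuousLinearMap.sum_apply, ContinuousLinearMap.add_apply,
      ContinuousLinearMap.smul_apply, ContinuousLinearMap.proj_apply,
      Pi.single_apply, smul_eq_mul, mul_ite, mul_one, mul_zero]
    simp only [Finset.sum_add_distrib]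
    have h1 : ∑ j : Fin n, ∑ k : Fin n, (if k = i then m j k * x j else 0)
        = ∑ j : Fin n, m j i * x j := by simp
    have h2 : ∑ j : Fin n, ∑ k : Fin n, (if j = i then x k * m j k else 0)
        = ∑ k : Fin n, x k * m i k := by rw [Finset.sum_comm]; simp
    rw [h1, h2, ← Finset.sum_add_distrib]
    apply Finset.sum_congr rfl
    intro j _
    ring
  unfold IG
  have hint : (∫ t in (0:ℝ)..1,
      fderiv ℝ f (fun j => a j + t * (b j - a j)) (Pi.single i 1))
      = ∑ j, (m i j + m j i) * (a j + b j) / 2 := by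
    have : ∀ t : ℝ, fderiv ℝ f (fun j => a j + t * (b j - a j)) (Pi.single i 1)
        = ∑ j, (m i j + m j i) * (a j + t * (b j - a j)) := fun t => key _
    simp only [this]
    rw [intervalIntegral.integral_finset_sum]
    · apply Finset.sum_congr rfl
      intro j _
      have : (fun t : ℝ => (m i j + m j i) * (a j + t * (b j - a j)))
          = fun t : ℝ => (m i j + m j i) * a j + ((m i j + m j i) * (b j - a j)) * t := by
        funext t; ring
      rw [this, intervalIntegral.integral_add, intervalIntegral.integral_const,
        intervalIntegral.integral_const_mul, integral_id]
      · simp [smul_eq_mul]; ring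
      · exact (intervalIntegrable_const)
      · exact (continuous_const.mul continuous_id).intervalIntegrable _ _
    · intro j _
      exact (continuous_const.mul (continuous_const.add
        (continuous_id.mul continuous_const))).intervalIntegrable _ _
  rw [hint]
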